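/- Let the dataset be linearly separable and symmetric (each (x,y) appears together with (−x,−y)), with max-margin linear separator w* ∈ S^{d-1}. Then for a two-layer Leaky ReLU network of width m ≥ 2, any unit-norm global maximizer θ* of the normalized margin γ(θ) = min_i y_i f_θ(x_i) / ‖θ‖² represents a linear function: f_{θ*}(x) = ((1+α)/4)⟨w*, x⟩ for all x ∈ ℝ^d. -/

import Mathlib

open Finset

section Aux
open RealInnerProductSpace

variable {E : Type*} [NormedAddCommGroup E] [InnerProductSpace ℝ E]

lemma stmt8_phi_pos {α s : ℝ} (hα1 : α < 1) (hs : 0 ≤ s) : max s (α * s) = s :=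
  max_eq_left (by nlinarith)

lemma stmt8_phi_neg {α s : ℝ} (hα1 : α < 1) (hs : s ≤ 0) : max s (α * s) = α * s :=
  max_eq_right (by nlinarith)

lemma stmt8_phi_diff {α : ℝ} (hα1 : α < 1) (s : ℝ) :
    max s (α * s) - max (-s) (α * -s) = (1 + α) * s := by
  rcases le_total 0 s with h | h
  · rw [stmt8_phi_pos hα1 h, stmt8_phi_neg hα1 (by linarith)]; ring
  · rw [stmt8_phi_neg hα1 h, stmt8_phi_pos hα1 (by linarith)]; ring

/-- Cauchy–Schwarz equality case against a unit vector. -/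
lemma stmt8_cs_eq {v p : E} (hv : ‖v‖ = 1) (h : ⟪p, v⟫ = ‖p‖) : p = ‖p‖ • v := by
  have h2 : ‖p - ‖p‖ • v‖ ^ 2 = 0 := by
    rw [norm_sub_sq_real, real_inner_smul_right, norm_smul, Real.norm_eq_abs,
      abs_of_nonneg (norm_nonneg p), hv, h]
    ring
  have := pow_eq_zero_iff (n := 2) (by norm_num) |>.mp h2
  rw [norm_eq_zero, sub_eq_zero] at this
  exact this

end Aux
set_option maxHeartbeats 2000000 in
theorem stmt_8 (d half m : ℕ) (hhalf : 0 < half) (hm : 2 ≤ m)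
    (α : ℝ) (hα : 0 < α) (hα1 : α < 1)
    (φ : ℝ → ℝ) (hφ : ∀ z, φ z = max z (α * z))
    (x : Fin (half + half) → EuclideanSpace ℝ (Fin d))
    (y : Fin (half + half) → ℝ)
    (hxnorm : ∀ i, ‖x i‖ ≤ 1)
    (hy1 : ∀ i : Fin half, y (Fin.castAdd half i) = 1)
    (hy2 : ∀ i : Fin half, y (Fin.natAdd half i) = -1)
    (hx : ∀ i : Fin half, x (Fin.natAdd half i) = - x (Fin.castAdd half i))
    (hsep : ∃ v : EuclideanSpace ℝ (Fin d), ∀ i, (1 : ℝ) ≤ y i * inner ℝ v (x i))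
    (wstar : EuclideanSpace ℝ (Fin d)) (hwstar : ‖wstar‖ = 1)
    (hwstarmax : ∀ v : EuclideanSpace ℝ (Fin d), ‖v‖ = 1 →
      (Finset.univ.inf' ⟨⟨0, by omega⟩, Finset.mem_univ _⟩
          (fun i : Fin (half + half) => y i * inner ℝ v (x i))) ≤
        Finset.univ.inf' ⟨⟨0, by omega⟩, Finset.mem_univ _⟩
          (fun i : Fin (half + half) => y i * inner ℝ wstar (x i)))
    (w : Fin m → EuclideanSpace ℝ (Fin d)) (a : Fin m → ℝ)
    (hunit : ∑ k, ‖w k‖ ^ 2 + ∑ k, (a k) ^ 2 = 1)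
    (hmax : ∀ (w' : Fin m → EuclideanSpace ℝ (Fin d)) (a' : Fin m → ℝ),
      ∑ k, ‖w' k‖ ^ 2 + ∑ k, (a' k) ^ 2 = 1 →
      (Finset.univ.inf' ⟨⟨0, by omega⟩, Finset.mem_univ _⟩
          (fun i : Fin (half + half) => y i * ∑ k, a' k * φ (inner ℝ (w' k) (x i)))) ≤
        Finset.univ.inf' ⟨⟨0, by omega⟩, Finset.mem_univ _⟩
          (fun i : Fin (half + half) => y i * ∑ k, a k * φ (inner ℝ (w k) (x i)))) :
    ∀ z : EuclideanSpace ℝ (Fin d),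
      ∑ k, a k * φ (inner ℝ (w k) z) = ((1 + α) / 4) * inner ℝ wstar z := by
  have hne : (Finset.univ : Finset (Fin (half + half))).Nonempty :=
    ⟨⟨0, by omega⟩, Finset.mem_univ _⟩
  set γs : ℝ := Finset.univ.inf' hne (fun i : Fin (half + half) => y i * inner ℝ wstar (x i))
    with hγs
  set M : ℝ := Finset.univ.inf' hne
      (fun i : Fin (half + half) => y i * ∑ k, a k * φ (inner ℝ (w k) (x i))) with hM
  -- Step A : γs > 0
  have hγpos : 0 < γs := by
    obtain ⟨v, hv⟩ := hsep
    have hvpos : 0 < ‖v‖ := by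
      rcases eq_or_ne v 0 with rfl | hv0
      · have h0 := hv ⟨0, by omega⟩
        simp only [inner_zero_left, mul_zero] at h0
        linarith
      · exact norm_pos_iff.mpr hv0
    have hvu : ‖(‖v‖⁻¹ • v)‖ = 1 := by
      rw [norm_smul, Real.norm_eq_abs, abs_of_nonneg (by positivity),
        inv_mul_cancel₀ (ne_of_gt hvpos)]
    have h1 : (‖v‖)⁻¹ ≤ γs := by
      refine le_trans ?_ (hwstarmax _ hvu)
      apply Finset.le_inf'
      intro i _
      rw [real_inner_smul_left]
      nlinarith [mul_le_mul_of_nonneg_left (hv i) (le_of_lt (inv_pos.mpr hvpos))]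
    have := inv_pos.mpr hvpos
    linarith
  -- Step B : lower bound on M
  have hlow : (1 + α) / 4 * γs ≤ M := by
    have h01 : (⟨0, by omega⟩ : Fin m) ≠ ⟨1, by omega⟩ := by simp [Fin.ext_iff]
    set i0 : Fin m := ⟨0, by omega⟩ with hi0
    set i1 : Fin m := ⟨1, by omega⟩ with hi1
    set w' : Fin m → EuclideanSpace ℝ (Fin d) :=
      fun k => if k = i0 then (1/2 : ℝ) • wstar else if k = i1 then (-(1/2) : ℝ) • wstar else 0
      with hw'
    set a' : Fin m → ℝ := fun k => if k = i0 then 1/2 else if k = i1 then -(1/2) else 0 with ha'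
    have hpairsum : ∀ g : Fin m → ℝ, (∀ k, k ≠ i0 → k ≠ i1 → g k = 0) →
        ∑ k, g k = g i0 + g i1 := by
      intro g hg
      rw [← Finset.sum_pair h01]
      refine (Finset.sum_subset (Finset.subset_univ _) ?_).symm
      intro k _ hk
      simp only [Finset.mem_insert, Finset.mem_singleton, not_or] at hk
      exact hg k hk.1 hk.2
    have hw'0 : w' i0 = (1/2 : ℝ) • wstar := by rw [hw']; simp
    have hw'1 : w' i1 = (-(1/2) : ℝ) • wstar := by rw [hw']; simp [h01.symm]
    have ha'0 : a' i0 = 1/2 := by rw [ha']; simp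
    have ha'1 : a' i1 = -(1/2) := by rw [ha']; simp [h01.symm]
    have hWnorm : ∑ k, ‖w' k‖ ^ 2 = 1/2 := by
      rw [hpairsum _ (fun k h0 h1 => by rw [hw']; simp [h0, h1]), hw'0, hw'1]
      rw [norm_smul, norm_smul, hwstar, Real.norm_eq_abs, Real.norm_eq_abs]
      norm_num
    have hAnorm : ∑ k, (a' k) ^ 2 = 1/2 := by
      rw [hpairsum _ (fun k h0 h1 => by rw [ha']; simp [h0, h1]), ha'0, ha'1]
      norm_num
    have hf' : ∀ i, (∑ k, a' k * φ (inner ℝ (w' k) (x i))) =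
        (1 + α) / 4 * inner ℝ wstar (x i) := by
      intro i
      rw [hpairsum _ (fun k h0 h1 => by rw [ha', hw']; simp [h0, h1]),
        ha'0, ha'1, hw'0, hw'1, real_inner_smul_left, real_inner_smul_left]
      rcases le_total 0 (inner ℝ wstar (x i) : ℝ) with ht | ht
      · rw [hφ, hφ, stmt8_phi_pos hα1 (by linarith), stmt8_phi_neg hα1 (by linarith)]
        ring
      · rw [hφ, hφ, stmt8_phi_neg hα1 (by linarith), stmt8_phi_pos hα1 (by linarith)]
        ring
    have hkey : (1 + α) / 4 * γs ≤ Finset.univ.inf' hne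
        (fun i : Fin (half + half) => y i * ∑ k, a' k * φ (inner ℝ (w' k) (x i))) := by
      apply Finset.le_inf'
      intro i _
      rw [hf' i]
      have h1 : γs ≤ y i * inner ℝ wstar (x i) := Finset.inf'_le _ (Finset.mem_univ i)
      nlinarith [mul_le_mul_of_nonneg_left h1 (show (0:ℝ) ≤ (1+α)/4 by linarith)]
    exact le_trans hkey (hmax w' a' (by rw [hWnorm, hAnorm]; norm_num))
  -- Step C : pairing
  set u : EuclideanSpace ℝ (Fin d) := ∑ k, a k • w k with hu
  have hfdiff : ∀ j : Fin half,
      (∑ k, a k * φ (inner ℝ (w k) (x (Fin.castAdd half j)))) -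
      (∑ k, a k * φ (inner ℝ (w k) (x (Fin.natAdd half j)))) =
      (1 + α) * inner ℝ u (x (Fin.castAdd half j)) := by
    intro j
    rw [hx j, hu, sum_inner, ← Finset.sum_sub_distrib, Finset.mul_sum]
    apply Finset.sum_congr rfl
    intro k _
    rw [inner_neg_right, hφ, hφ, real_inner_smul_left]
    have h := stmt8_phi_diff hα1 (inner ℝ (w k) (x (Fin.castAdd half j)))
    linear_combination a k * h
  have hpairhalf : ∀ j : Fin half, 2 * M ≤ (1 + α) * inner ℝ u (x (Fin.castAdd half j)) := by
    intro j
    have h1 : M ≤ y (Fin.castAdd half j) *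
        ∑ k, a k * φ (inner ℝ (w k) (x (Fin.castAdd half j))) :=
      Finset.inf'_le _ (Finset.mem_univ _)
    have h2 : M ≤ y (Fin.natAdd half j) *
        ∑ k, a k * φ (inner ℝ (w k) (x (Fin.natAdd half j))) :=
      Finset.inf'_le _ (Finset.mem_univ _)
    rw [hy1 j, one_mul] at h1
    rw [hy2 j, neg_one_mul] at h2
    linarith [hfdiff j]
  have hpair : ∀ i : Fin (half + half), 2 * M ≤ (1 + α) * (y i * inner ℝ u (x i)) := by
    refine Fin.addCases ?_ ?_
    · intro j; rw [hy1 j, one_mul]; exact hpairhalf j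
    · intro j; rw [hy2 j, hx j, inner_neg_right]
      have := hpairhalf j
      nlinarith [hpairhalf j]
  -- Step D : norm bounds
  have hnormsum : ‖u‖ ≤ ∑ k, ‖a k • w k‖ := norm_sum_le _ _
  have htermle : ∀ k : Fin m, ‖a k • w k‖ ≤ ((a k) ^ 2 + ‖w k‖ ^ 2) / 2 := by
    intro k
    rw [norm_smul, Real.norm_eq_abs]
    nlinarith [sq_abs (a k), abs_nonneg (a k), norm_nonneg (w k), sq_nonneg (|a k| - ‖w k‖)]
  have hsumle : ∑ k, ‖a k • w k‖ ≤ 1 / 2 := by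
    calc ∑ k, ‖a k • w k‖ ≤ ∑ k, ((a k) ^ 2 + ‖w k‖ ^ 2) / 2 :=
          Finset.sum_le_sum fun k _ => htermle k
      _ = 1 / 2 := by rw [← Finset.sum_div, Finset.sum_add_distrib]; linarith [hunit]
  -- Step E : min margin of u
  have hμub : Finset.univ.inf' hne (fun i : Fin (half + half) => y i * inner ℝ u (x i)) ≤
      ‖u‖ * γs := by
    rcases eq_or_ne u 0 with hu0 | hu0
    · refine le_trans
        (Finset.inf'_le _ (Finset.mem_univ (⟨0, by omega⟩ : Fin (half + half)))) ?_
      rw [hu0]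
      simp
    · have hupos : 0 < ‖u‖ := norm_pos_iff.mpr hu0
      have hvu : ‖(‖u‖⁻¹ • u)‖ = 1 := by
        rw [norm_smul, Real.norm_eq_abs, abs_of_nonneg (by positivity),
          inv_mul_cancel₀ (ne_of_gt hupos)]
      obtain ⟨i, _, hie⟩ := Finset.exists_mem_eq_inf' hne
        (fun i : Fin (half + half) => y i * inner ℝ (‖u‖⁻¹ • u) (x i))
      have hle : Finset.univ.inf' hne
          (fun i : Fin (half + half) => y i * inner ℝ (‖u‖⁻¹ • u) (x i)) ≤ γs :=
        hwstarmax _ hvu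
      calc Finset.univ.inf' hne (fun i : Fin (half + half) => y i * inner ℝ u (x i))
          ≤ y i * inner ℝ u (x i) := Finset.inf'_le _ (Finset.mem_univ i)
        _ = ‖u‖ * (y i * inner ℝ (‖u‖⁻¹ • u) (x i)) := by
            rw [real_inner_smul_left]
            field_simp
        _ = ‖u‖ * Finset.univ.inf' hne
            (fun i : Fin (half + half) => y i * inner ℝ (‖u‖⁻¹ • u) (x i)) := by rw [hie]
        _ ≤ ‖u‖ * γs := mul_le_mul_of_nonneg_left hle (norm_nonneg u)
  have hμlb : ∀ i : Fin (half + half), 2 * M / (1 + α) ≤ y i * inner ℝ u (x i) := by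
    intro i
    rw [div_le_iff₀ (by linarith)]
    linarith [hpair i]
  have hμ : 2 * M / (1 + α) ≤ ‖u‖ * γs :=
    le_trans (Finset.le_inf' hne _ (fun i _ => hμlb i)) hμub
  have hule : ‖u‖ ≤ 1 / 2 := le_trans hnormsum hsumle
  have hMub : M ≤ (1 + α) / 4 * γs := by
    have h := hμ
    rw [div_le_iff₀ (by linarith : (0:ℝ) < 1 + α)] at h
    have hA : ‖u‖ * γs ≤ (1/2) * γs := mul_le_mul_of_nonneg_right hule hγpos.le
    nlinarith [mul_le_mul_of_nonneg_left hA hα.le]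
  have hMeq : M = (1 + α) / 4 * γs := le_antisymm hMub hlow
  have hnu : ‖u‖ = 1 / 2 := by
    refine le_antisymm hule ?_
    have h := hμ
    rw [hMeq] at h
    have e : 2 * ((1 + α) / 4 * γs) / (1 + α) = γs / 2 := by
      field_simp
      ring
    rw [e] at h
    nlinarith [h, hγpos]
  -- Step F : 2u = wstar
  have hvnorm : ‖(2 : ℝ) • u‖ = 1 := by
    rw [norm_smul, Real.norm_eq_abs, hnu]
    norm_num
  have hmarg2u : ∀ i : Fin (half + half), γs ≤ y i * inner ℝ ((2:ℝ) • u) (x i) := by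
    intro i
    rw [real_inner_smul_left]
    have h := hμlb i
    have e : 2 * M / (1 + α) = γs / 2 := by
      rw [hMeq]
      field_simp
      ring
    rw [e] at h
    nlinarith [h]
  have hveq : (2 : ℝ) • u = wstar := by
    by_contra hne2
    set q : EuclideanSpace ℝ (Fin d) := (2:ℝ) • u + wstar with hq
    have hip : (inner ℝ ((2:ℝ)•u) wstar : ℝ) < 1 := by
      have h0 : (0:ℝ) < ‖(2:ℝ)•u - wstar‖ ^ 2 :=
        pow_pos (norm_pos_iff.mpr (sub_ne_zero.mpr hne2)) 2
      rw [norm_sub_sq_real, hvnorm, hwstar] at h0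
      nlinarith [h0]
    have hqnorm : ‖q‖ ^ 2 < 4 := by
      rw [hq, norm_add_sq_real, hvnorm, hwstar]
      nlinarith [hip]
    have hqlt : ‖q‖ < 2 := by nlinarith [norm_nonneg q]
    have hqmarg : ∀ i : Fin (half + half), 2 * γs ≤ y i * inner ℝ q (x i) := by
      intro i
      rw [hq, inner_add_left]
      have h1 := hmarg2u i
      have h2 : γs ≤ y i * inner ℝ wstar (x i) := Finset.inf'_le _ (Finset.mem_univ i)
      nlinarith [h1, h2]
    have hq0 : q ≠ 0 := by
      intro h0
      have h := hqmarg ⟨0, by omega⟩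
      rw [h0] at h
      simp only [inner_zero_left, mul_zero] at h
      linarith
    have hqpos : 0 < ‖q‖ := norm_pos_iff.mpr hq0
    have hvu : ‖(‖q‖⁻¹ • q)‖ = 1 := by
      rw [norm_smul, Real.norm_eq_abs, abs_of_nonneg (by positivity),
        inv_mul_cancel₀ (ne_of_gt hqpos)]
    have hcon : γs < Finset.univ.inf' hne
        (fun i : Fin (half + half) => y i * inner ℝ (‖q‖⁻¹ • q) (x i)) := by
      have hstep : γs < ‖q‖⁻¹ * (2 * γs) := by
        rw [← mul_lt_mul_iff_right₀ hqpos]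
        have e : ‖q‖ * (‖q‖⁻¹ * (2 * γs)) = 2 * γs := by
          field_simp
        rw [e]
        nlinarith [hqlt, hγpos]
      refine lt_of_lt_of_le hstep (Finset.le_inf' hne _ ?_)
      intro i _
      rw [real_inner_smul_left]
      nlinarith [mul_le_mul_of_nonneg_left (hqmarg i) (le_of_lt (inv_pos.mpr hqpos))]
    have hle := hwstarmax _ hvu
    have : Finset.univ.inf' hne
        (fun i : Fin (half + half) => y i * inner ℝ (‖q‖⁻¹ • q) (x i)) ≤ γs := hle
    linarith
  -- Step G : each neuron aligned
  have hcsum : ∑ k, ‖a k • w k‖ = 1 / 2 := le_antisymm hsumle (by rw [← hnu]; exact hnormsum)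
  have hS : ∑ k, ((a k) ^ 2 + ‖w k‖ ^ 2) / 2 = 1 / 2 := by
    rw [← Finset.sum_div, Finset.sum_add_distrib]
    linarith [hunit]
  have hterm_eq := (Finset.sum_eq_sum_iff_of_le (fun k _ => htermle k)).mp
    (by rw [hcsum, hS])
  have hwk : ∀ k, ‖w k‖ = |a k| := by
    intro k
    have h := hterm_eq k (Finset.mem_univ k)
    rw [norm_smul, Real.norm_eq_abs] at h
    have h2 : (|a k| - ‖w k‖) ^ 2 = 0 := by
      have hle2 : (|a k| - ‖w k‖) ^ 2 ≤ 0 := by nlinarith [sq_abs (a k)]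
      have := sq_nonneg (|a k| - ‖w k‖)
      linarith
    have h3 := pow_eq_zero_iff (n := 2) (by norm_num) |>.mp h2
    linarith [sub_eq_zero.mp h3, abs_nonneg (a k)]
  have hinnersum : ∑ k, (inner ℝ (a k • w k) wstar : ℝ) = 1 / 2 := by
    rw [← sum_inner, ← hu, ← hveq, real_inner_smul_right, real_inner_self_eq_norm_sq, hnu]
    norm_num
  have htermle2 : ∀ k ∈ Finset.univ, (inner ℝ (a k • w k) wstar : ℝ) ≤ ‖a k • w k‖ := by
    intro k _
    calc (inner ℝ (a k • w k) wstar : ℝ) ≤ ‖a k • w k‖ * ‖wstar‖ := real_inner_le_norm _ _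
      _ = ‖a k • w k‖ := by rw [hwstar, mul_one]
  have hterm_eq2 := (Finset.sum_eq_sum_iff_of_le htermle2).mp (by rw [hinnersum, hcsum])
  have hawk : ∀ k, a k • w k = (a k) ^ 2 • wstar := by
    intro k
    have h := hterm_eq2 k (Finset.mem_univ k)
    have h2 := stmt8_cs_eq hwstar h
    rw [h2, norm_smul, Real.norm_eq_abs, hwk k, abs_mul_abs_self, sq]
  have hwkw : ∀ k, w k = a k • wstar := by
    intro k
    rcases eq_or_ne (a k) 0 with h0 | h0
    · have hz : ‖w k‖ = 0 := by rw [hwk k, h0, abs_zero]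
      rw [norm_eq_zero] at hz
      rw [hz, h0, zero_smul]
    · have h := hawk k
      rw [sq, mul_smul] at h
      exact smul_right_injective _ h0 h
  -- Step H : balance
  have hsq : ∑ k, (a k) ^ 2 = 1 / 2 := by
    have h : ∑ k, ‖w k‖ ^ 2 = ∑ k, (a k) ^ 2 := by
      apply Finset.sum_congr rfl
      intro k _
      rw [hwk k, sq_abs]
    linarith [hunit]
  set P : ℝ := ∑ k ∈ Finset.univ.filter (fun k => 0 ≤ a k), (a k) ^ 2 with hP
  set N : ℝ := ∑ k ∈ Finset.univ.filter (fun k => ¬ 0 ≤ a k), (a k) ^ 2 with hN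
  have hPN : P + N = 1 / 2 := by
    rw [hP, hN, Finset.sum_filter_add_sum_filter_not]; exact hsq
  have hgpos : ∀ t : ℝ, 0 ≤ t → ∑ k, a k * φ (a k * t) = (P + α * N) * t := by
    intro t ht
    rw [← Finset.sum_filter_add_sum_filter_not Finset.univ (fun k => 0 ≤ a k)]
    have e1 : ∑ k ∈ Finset.univ.filter (fun k => 0 ≤ a k), a k * φ (a k * t)
        = ∑ k ∈ Finset.univ.filter (fun k => 0 ≤ a k), (a k) ^ 2 * t := by
      refine Finset.sum_congr rfl fun k hk => ?_
      rw [Finset.mem_filter] at hk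
      rw [hφ, stmt8_phi_pos hα1 (mul_nonneg hk.2 ht)]
      ring
    have e2 : ∑ k ∈ Finset.univ.filter (fun k => ¬ 0 ≤ a k), a k * φ (a k * t)
        = ∑ k ∈ Finset.univ.filter (fun k => ¬ 0 ≤ a k), α * ((a k) ^ 2 * t) := by
      refine Finset.sum_congr rfl fun k hk => ?_
      rw [Finset.mem_filter] at hk
      rw [hφ, stmt8_phi_neg hα1 (mul_nonpos_of_nonpos_of_nonneg (le_of_not_ge hk.2) ht)]
      ring
    rw [e1, e2, ← Finset.sum_mul, ← Finset.mul_sum, ← Finset.sum_mul, ← hP, ← hN]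
    ring
  have hgneg : ∀ t : ℝ, t ≤ 0 → ∑ k, a k * φ (a k * t) = (α * P + N) * t := by
    intro t ht
    rw [← Finset.sum_filter_add_sum_filter_not Finset.univ (fun k => 0 ≤ a k)]
    have e1 : ∑ k ∈ Finset.univ.filter (fun k => 0 ≤ a k), a k * φ (a k * t)
        = ∑ k ∈ Finset.univ.filter (fun k => 0 ≤ a k), α * ((a k) ^ 2 * t) := by
      refine Finset.sum_congr rfl fun k hk => ?_
      rw [Finset.mem_filter] at hk
      rw [hφ, stmt8_phi_neg hα1 (mul_nonpos_of_nonneg_of_nonpos hk.2 ht)]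
      ring
    have e2 : ∑ k ∈ Finset.univ.filter (fun k => ¬ 0 ≤ a k), a k * φ (a k * t)
        = ∑ k ∈ Finset.univ.filter (fun k => ¬ 0 ≤ a k), (a k) ^ 2 * t := by
      refine Finset.sum_congr rfl fun k hk => ?_
      rw [Finset.mem_filter] at hk
      rw [hφ, stmt8_phi_pos hα1 (by nlinarith [mul_nonneg (neg_nonneg.2 (le_of_not_ge hk.2)) (neg_nonneg.2 ht)])]
      ring
    rw [e1, e2, ← Finset.mul_sum, ← Finset.sum_mul, ← Finset.sum_mul, ← hP, ← hN]
    ring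
  have hPeq : P = 1 / 4 ∧ N = 1 / 4 := by
    obtain ⟨j, hj⟩ : ∃ j : Fin half, (inner ℝ wstar (x (Fin.castAdd half j)) : ℝ) = γs := by
      obtain ⟨i, _, hie⟩ := Finset.exists_mem_eq_inf' hne
        (fun i : Fin (half + half) => y i * inner ℝ wstar (x i))
      revert hie
      refine Fin.addCases (motive := fun i => γs = y i * inner ℝ wstar (x i) →
        ∃ j : Fin half, (inner ℝ wstar (x (Fin.castAdd half j)) : ℝ) = γs) ?_ ?_ i
      · intro j h
        rw [hy1 j, one_mul] at h
        exact ⟨j, h.symm⟩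
      · intro j h
        rw [hy2 j, hx j, inner_neg_right] at h
        exact ⟨j, by linarith⟩
    have hfj : ∀ i : Fin (half + half), (∑ k, a k * φ (inner ℝ (w k) (x i))) =
        ∑ k, a k * φ (a k * inner ℝ wstar (x i)) := by
      intro i
      refine Finset.sum_congr rfl fun k _ => ?_
      rw [hwkw k, real_inner_smul_left]
    have h1 : M ≤ (P + α * N) * γs := by
      have h : M ≤ y (Fin.castAdd half j) *
          ∑ k, a k * φ (inner ℝ (w k) (x (Fin.castAdd half j))) :=
        Finset.inf'_le _ (Finset.mem_univ _)
      rw [hy1 j, one_mul, hfj, hj, hgpos γs (le_of_lt hγpos)] at h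
      exact h
    have h2 : M ≤ (α * P + N) * γs := by
      have h : M ≤ y (Fin.natAdd half j) *
          ∑ k, a k * φ (inner ℝ (w k) (x (Fin.natAdd half j))) :=
        Finset.inf'_le _ (Finset.mem_univ _)
      rw [hy2 j, hfj, hx j, inner_neg_right, hj] at h
      have e : ∑ k, a k * φ (a k * -γs) = (α * P + N) * -γs := hgneg (-γs) (by linarith)
      rw [e] at h
      nlinarith [h]
    rw [hMeq] at h1 h2
    have e1 : (1 + α) / 4 ≤ P + α * N := by nlinarith [h1, hγpos]
    have e2 : (1 + α) / 4 ≤ α * P + N := by nlinarith [h2, hγpos]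
    have e3 : α * P + α * N = α / 2 := by linear_combination α * hPN
    constructor
    · nlinarith [e1, e3, hα, hα1, hPN]
    · nlinarith [e2, e3, hα, hα1, hPN]
  -- conclusion
  intro z
  have hz : ∀ k, (inner ℝ (w k) z : ℝ) = a k * inner ℝ wstar z := by
    intro k; rw [hwkw k, real_inner_smul_left]
  simp_rw [hz]
  rcases le_total 0 (inner ℝ wstar z : ℝ) with ht | ht
  · rw [hgpos _ ht, hPeq.1, hPeq.2]; ring
  · rw [hgneg _ ht, hPeq.1, hPeq.2]; ring
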